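/- Let λ be an infinite regular cardinal and let X be a linearly ordered set of cardinality λ. Then X either has a subset order-isomorphic to λ (with its ordinal order) or order-isomorphic to the reverse order of λ, or it has a subset of order type ω that is λ-full in X on the right. -/

import Mathlib

universe u

open Set Cardinal

/-- A subset `Y` of a linear order `X`, without a maximum, is `lam`-full in `X` on the right
if for every `y ∈ Y` the set `⋃ y' ∈ Y, (y, y')` (intervals computed in `X`)
has cardinality at least `lam`. -/
def FullRight {X : Type u} [LinearOrder X] (lam : Cardinal.{u}) (Y : Set X) : Prop :=
  (¬ ∃ m ∈ Y, ∀ y ∈ Y, y ≤ m) ∧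
    ∀ y ∈ Y, lam ≤ #(⋃ y' ∈ Y, Ioo y y')

section Aux

variable {X : Type u} [LinearOrder X] {lam : Cardinal.{u}}

/-- If every subset of `Y` of size `< lam` has a strict upper bound in `Y`,
then there is a strictly increasing `lam`-chain. -/
lemma lemA (Y : Set X)
    (H : ∀ s : Set X, s ⊆ Y → #s < lam → ∃ y ∈ Y, ∀ x ∈ s, x < y) :
    ∃ f : lam.ord.ToType → X, StrictMono f := by
  classical
  have key : ∀ (a : lam.ord.ToType) (ih : ∀ b, b < a → Y),
      ∃ y : Y, ∀ b, ∀ hb : b < a, (ih b hb : X) < (y : X) := by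
    intro a ih
    obtain ⟨y, hyY, hy⟩ := H (Set.range fun b : Iio a => (ih b.1 b.2 : X))
      (by rintro x ⟨b, rfl⟩; exact (ih b.1 b.2).2)
      (lt_of_le_of_lt Cardinal.mk_range_le (Cardinal.mk_Iio_toType_ord_lt a))
    exact ⟨⟨y, hyY⟩, fun b hb => hy _ ⟨⟨b, hb⟩, rfl⟩⟩
  let F : lam.ord.ToType → Y := WellFoundedLT.fix fun a ih => (key a ih).choose
  have hF : ∀ a b, b < a → (F b : X) < (F a : X) := by
    intro a b hb
    have h1 : F a = (key a fun c _ => F c).choose :=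
      WellFoundedLT.fix_eq (fun a ih => (key a ih).choose) a
    rw [h1]
    exact (key a fun c _ => F c).choose_spec b hb
  exact ⟨fun a => (F a : X), fun a b h => hF b a h⟩

/-- Dual version: strict lower bounds give a strictly decreasing `lam`-chain. -/
lemma lemA' (Y : Set X)
    (H : ∀ s : Set X, s ⊆ Y → #s < lam → ∃ y ∈ Y, ∀ x ∈ s, y < x) :
    ∃ f : lam.ord.ToType → X, StrictAnti f := by
  have H' : ∀ s : Set Xᵒᵈ, s ⊆ OrderDual.ofDual ⁻¹' Y → #s < lam →
      ∃ y ∈ OrderDual.ofDual ⁻¹' Y, ∀ x ∈ s, x < y := by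
    intro s hs hcs
    obtain ⟨y, hyY, h⟩ := H (OrderDual.ofDual '' s)
      (by rintro x ⟨a, ha, rfl⟩; exact hs ha)
      (by rwa [Cardinal.mk_image_eq (OrderDual.ofDual.injective)])
    exact ⟨OrderDual.toDual y, hyY, fun x hx => h _ ⟨x, hx, rfl⟩⟩
  obtain ⟨f, hf⟩ := lemA (X := Xᵒᵈ) (lam := lam) (OrderDual.ofDual ⁻¹' Y) H'
  exact ⟨fun a => OrderDual.ofDual (f a), fun a b h => hf h⟩

end Aux

/-- Every linear order of infinite regular cardinality `lam` has either a subset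
order-isomorphic to `lam`, or a subset order-isomorphic to the reverse of `lam`, or a
subset of order type `ω` which is `lam`-full on the right. -/
theorem stmt0 (lam : Cardinal.{u}) (hlam : lam.IsRegular) (X : Type u) [LinearOrder X]
    (hcard : #X = lam) :
    (∃ f : lam.ord.ToType → X, StrictMono f) ∨
    (∃ f : lam.ord.ToType → X, StrictAnti f) ∨
    (∃ f : ℕ → X, StrictMono f ∧ FullRight lam (Set.range f)) := by
  classical
  have hinf : ℵ₀ ≤ lam := hlam.aleph0_le
  have hone : (1 : Cardinal) < lam := one_lt_aleph0.trans_le hinf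
  set r : X → X → Prop := fun x y => #(uIcc x y) < lam with hr
  have hrefl : ∀ x, r x x := fun x => by
    show #(uIcc x x) < lam
    rw [uIcc_self, Cardinal.mk_singleton]
    exact hone
  have hsymm : ∀ {x y}, r x y → r y x := by
    intro x y h
    show #(uIcc y x) < lam
    rwa [uIcc_comm]
  have htrans : ∀ {x y z}, r x y → r y z → r x z := by
    intro x y z hxy hyz
    show #(uIcc x z) < lam
    exact lt_of_le_of_lt
      ((Cardinal.mk_le_mk_of_subset (uIcc_subset_uIcc_union_uIcc (b := y))).trans
        (Cardinal.mk_union_le _ _))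
      (Cardinal.add_lt_of_lt hinf hxy hyz)
  by_cases hbig : ∃ x : X, lam ≤ #({y | r x y} : Set X)
  · -- some equivalence class is large
    obtain ⟨x₀, hx₀⟩ := hbig
    have hsplit : lam ≤ #({y | r x₀ y} ∩ Ioi x₀ : Set X) ∨
        lam ≤ #({y | r x₀ y} ∩ Iio x₀ : Set X) := by
      by_contra hc
      push_neg at hc
      have hsub : ({y | r x₀ y} : Set X) ⊆
          ({y | r x₀ y} ∩ Iio x₀) ∪ ({x₀} ∪ ({y | r x₀ y} ∩ Ioi x₀)) := by
        intro y hy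
        rcases lt_trichotomy y x₀ with h | h | h
        · exact Or.inl ⟨hy, h⟩
        · exact Or.inr (Or.inl h)
        · exact Or.inr (Or.inr ⟨hy, h⟩)
      have hlt : #({y | r x₀ y} : Set X) < lam :=
        lt_of_le_of_lt (Cardinal.mk_le_mk_of_subset hsub)
          (lt_of_le_of_lt (Cardinal.mk_union_le _ _)
            (Cardinal.add_lt_of_lt hinf hc.2
              (lt_of_le_of_lt (Cardinal.mk_union_le _ _)
                (Cardinal.add_lt_of_lt hinf (by simpa using hone) hc.1))))
      exact absurd hx₀ (not_le.2 hlt)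
    rcases hsplit with hY | hY
    · left
      apply lemA (lam := lam) ({y | r x₀ y} ∩ Ioi x₀)
      intro s hs hcs
      have hU : #(⋃ z : s, Icc x₀ (z : X)) < lam := by
        refine lt_of_le_of_lt Cardinal.mk_iUnion_le_sum_mk ?_
        refine Cardinal.sum_lt_of_isRegular hlam hcs ?_
        intro z
        have hz := hs z.2
        have heq : Icc x₀ (z : X) = uIcc x₀ (z : X) := (uIcc_of_le (le_of_lt hz.2)).symm
        rw [heq]
        exact hz.1
      have hns : ¬ ({y | r x₀ y} ∩ Ioi x₀ : Set X) ⊆ (⋃ z : s, Icc x₀ (z : X)) := by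
        intro hsub
        exact absurd (hY.trans (Cardinal.mk_le_mk_of_subset hsub)) (not_le.2 hU)
      obtain ⟨y, hyY, hyU⟩ := not_subset.1 hns
      refine ⟨y, hyY, ?_⟩
      intro x hx
      by_contra hle
      push_neg at hle
      exact hyU (mem_iUnion.2 ⟨⟨x, hx⟩, ⟨le_of_lt hyY.2, hle⟩⟩)
    · right; left
      apply lemA' (lam := lam) ({y | r x₀ y} ∩ Iio x₀)
      intro s hs hcs
      have hU : #(⋃ z : s, Icc (z : X) x₀) < lam := by
        refine lt_of_le_of_lt Cardinal.mk_iUnion_le_sum_mk ?_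
        refine Cardinal.sum_lt_of_isRegular hlam hcs ?_
        intro z
        have hz := hs z.2
        have heq : Icc (z : X) x₀ = uIcc x₀ (z : X) := by
          rw [uIcc_comm, uIcc_of_le (le_of_lt hz.2)]
        rw [heq]
        exact hz.1
      have hns : ¬ ({y | r x₀ y} ∩ Iio x₀ : Set X) ⊆ (⋃ z : s, Icc (z : X) x₀) := by
        intro hsub
        exact absurd (hY.trans (Cardinal.mk_le_mk_of_subset hsub)) (not_le.2 hU)
      obtain ⟨y, hyY, hyU⟩ := not_subset.1 hns
      refine ⟨y, hyY, ?_⟩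
      intro x hx
      by_contra hle
      push_neg at hle
      exact hyU (mem_iUnion.2 ⟨⟨x, hx⟩, ⟨hle, le_of_lt hyY.2⟩⟩)
  · -- all equivalence classes are small
    push_neg at hbig
    let sd : Setoid X := ⟨r, ⟨hrefl, hsymm, htrans⟩⟩
    have hQ : lam ≤ #(Quotient sd) := by
      by_contra hq
      push_neg at hq
      have hcov : (univ : Set X) ⊆ ⋃ q : Quotient sd, {y | r q.out y} := by
        intro x _
        refine mem_iUnion.2 ⟨Quotient.mk sd x, ?_⟩
        exact (Quotient.exact (Quotient.out_eq (Quotient.mk sd x)) : r _ x)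
      have h1 : #X ≤ Cardinal.sum fun q : Quotient sd => #({y | r q.out y} : Set X) :=
        calc #X = #(univ : Set X) := Cardinal.mk_univ.symm
        _ ≤ #(⋃ q : Quotient sd, {y | r q.out y}) := Cardinal.mk_le_mk_of_subset hcov
        _ ≤ _ := Cardinal.mk_iUnion_le_sum_mk
      have h2 : #X < lam :=
        lt_of_le_of_lt h1 (Cardinal.sum_lt_of_isRegular hlam hq fun q => hbig _)
      rw [hcard] at h2
      exact h2.false
    set T : Set X := Set.range (Quotient.out : Quotient sd → X) with hT
    have hTcard : lam ≤ #T := by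
      rw [hT, Cardinal.mk_range_eq _ Quotient.out_injective]
      exact hQ
    have hTne : ∀ a b : T, (a : X) ≠ (b : X) → ¬ r (a : X) (b : X) := by
      rintro ⟨a, qa, rfl⟩ ⟨b, qb, rfl⟩ hne hrab
      have hq : qa = qb := by
        have h := Quotient.sound (s := sd) hrab
        rwa [Quotient.out_eq, Quotient.out_eq] at h
      exact hne (by rw [hq])
    by_cases hmono : ∃ f : ℕ → T, StrictMono f
    · obtain ⟨f, hf⟩ := hmono
      right; right
      refine ⟨fun n => (f n : X), fun a b h => Subtype.coe_lt_coe.2 (hf h), ?_, ?_⟩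
      · rintro ⟨m, ⟨n, rfl⟩, hm⟩
        exact absurd (hm _ ⟨n + 1, rfl⟩)
          (not_le.2 (Subtype.coe_lt_coe.2 (hf (Nat.lt_succ_self n))))
      · rintro y ⟨n, rfl⟩
        have hne : (f n : X) ≠ (f (n + 1) : X) :=
          ne_of_lt (Subtype.coe_lt_coe.2 (hf (Nat.lt_succ_self n)))
        have h1 : lam ≤ #(uIcc (f n : X) (f (n + 1) : X)) := not_lt.1 (hTne _ _ hne)
        rw [uIcc_of_le (le_of_lt (Subtype.coe_lt_coe.2 (hf (Nat.lt_succ_self n))))] at h1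
        have hsub : Icc (f n : X) (f (n + 1) : X) ⊆
            insert (f n : X) (Ioo (f n : X) (f (n + 2) : X)) := by
          intro x hx
          rcases eq_or_lt_of_le hx.1 with h | h
          · exact mem_insert_iff.2 (Or.inl h.symm)
          · refine mem_insert_iff.2 (Or.inr ⟨h, lt_of_le_of_lt hx.2 ?_⟩)
            exact Subtype.coe_lt_coe.2 (hf (Nat.lt_succ_self (n + 1)))
        have h2 : lam ≤ #(Ioo (f n : X) (f (n + 2) : X)) := by
          by_contra h2
          push_neg at h2
          have hins : #(insert (f n : X) (Ioo (f n : X) (f (n + 2) : X)) : Set X) < lam :=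
            lt_of_le_of_lt Cardinal.mk_insert_le (Cardinal.add_lt_of_lt hinf h2 hone)
          exact absurd (h1.trans (Cardinal.mk_le_mk_of_subset hsub)) (not_le.2 hins)
        refine h2.trans (Cardinal.mk_le_mk_of_subset ?_)
        intro x hx
        exact mem_iUnion₂.2 ⟨(f (n + 2) : X), ⟨n + 2, rfl⟩, hx⟩
    · right; left
      have hwf : WellFounded ((· > ·) : T → T → Prop) := by
        rw [RelEmbedding.wellFounded_iff_isEmpty]
        exact ⟨fun e => hmono ⟨fun n => e n, fun a b h => e.map_rel_iff.2 h⟩⟩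
      haveI : WellFoundedGT T := ⟨hwf⟩
      have hle : lam.ord ≤ Ordinal.type ((· > ·) : T → T → Prop) := by
        rw [Cardinal.ord_le, Ordinal.card_type]
        exact hTcard
      haveI : IsWellOrder lam.ord.ToType (· < ·) := isWellOrder_lt
      rw [← Ordinal.type_toType lam.ord] at hle
      obtain ⟨e⟩ := (Ordinal.type_le_iff' (r := ((· < ·) : lam.ord.ToType → lam.ord.ToType → Prop))
        (s := ((· > ·) : T → T → Prop))).1 hle
      exact ⟨fun a => ((e a : T) : X), fun a b h => Subtype.coe_lt_coe.2 (e.map_rel_iff.2 h)⟩
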